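/- For every smooth compactly supported function w on (0,∞): ∫₀^∞ (ΛZ(y)/y)·(A*w)(y)·w(y) · y dy = ∫₀^∞ (ΛZ(y)/y²)·w(y)² · y dy ≤ 0, where ΛZ(y) = y·Z'(y) = Z(y)² − 1 ≤ 0. (This sign identity underlies the Morawetz part of the mixed energy/Morawetz functional.) -/

import Mathlib

open MeasureTheory Real Set

noncomputable section

/-- `Z(y) = (1-y²)/(1+y²)`. -/
def Zfun (y : ℝ) : ℝ := (1 - y ^ 2) / (1 + y ^ 2)

/-- `A*w = w' + ((1+Z)/y) w`. -/
def Astar (w : ℝ → ℝ) (y : ℝ) : ℝ := deriv w y + (1 + Zfun y) / y * w y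

lemma Zfun_hasDerivAt (y : ℝ) : HasDerivAt Zfun (-4 * y / (1 + y ^ 2) ^ 2) y := by
  have h2 : (1 + y ^ 2) ≠ 0 := by positivity
  have h1 : HasDerivAt (fun y : ℝ => 1 - y ^ 2) (-(2 * y)) y := by
    simpa using ((hasDerivAt_pow 2 y).const_sub 1)
  have h3 : HasDerivAt (fun y : ℝ => 1 + y ^ 2) (2 * y) y := by
    simpa using ((hasDerivAt_pow 2 y).const_add 1)
  have h := h1.div h3 h2
  refine h.congr_deriv ?_
  ring

lemma deriv_Zfun : deriv Zfun = fun y => -4 * y / (1 + y ^ 2) ^ 2 :=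
  funext fun y => (Zfun_hasDerivAt y).deriv

/-- Sign identity behind the Morawetz functional: for smooth compactly supported `w`
on `(0,∞)`, with `ΛZ(y) = y Z'(y) = Z(y)² − 1 ≤ 0`,
`∫ (ΛZ/y)(A*w) w y dy = ∫ (ΛZ/y²) w² y dy ≤ 0`. -/
theorem morawetz_sign_identity (w : ℝ → ℝ)
    (hw : ContDiff ℝ (⊤ : ℕ∞) w) (hsupp : HasCompactSupport w)
    (hsupp' : tsupport w ⊆ Set.Ioi 0) :
    (∀ y : ℝ, 0 < y →
      y * deriv Zfun y = (Zfun y) ^ 2 - 1 ∧ y * deriv Zfun y ≤ 0) ∧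
    (∫ y in Set.Ioi (0:ℝ), (y * deriv Zfun y / y) * Astar w y * w y * y)
      = (∫ y in Set.Ioi (0:ℝ), (y * deriv Zfun y / y ^ 2) * (w y) ^ 2 * y) ∧
    (∫ y in Set.Ioi (0:ℝ), (y * deriv Zfun y / y ^ 2) * (w y) ^ 2 * y) ≤ 0 := by
  have hden : ∀ y : ℝ, (1 + y ^ 2) ≠ 0 := fun y => by positivity
  refine ⟨fun y hy => ?_, ?_, ?_⟩
  · rw [deriv_Zfun]
    constructor
    · simp only [Zfun]
      field_simp
      ring
    · have h : y * (-4 * y / (1 + y ^ 2) ^ 2) = -(4 * y ^ 2) / (1 + y ^ 2) ^ 2 := by ring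
      rw [h]
      apply div_nonpos_of_nonpos_of_nonneg
      · nlinarith [sq_nonneg y]
      · positivity
  · -- main identity
    -- continuous versions of the integrands
    set J1 : ℝ → ℝ := fun y =>
      (-4 * y / (1 + y ^ 2) ^ 2) * (y * deriv w y + (1 + Zfun y) * w y) * w y with hJ1
    set J2 : ℝ → ℝ := fun y => (-4 * y / (1 + y ^ 2) ^ 2) * (w y) ^ 2 with hJ2
    have hwd : Continuous (deriv w) := (hw.continuous_deriv (by exact_mod_cast le_top))
    have hZc : Continuous Zfun := by
      apply Continuous.div (by continuity) (by continuity) hden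
    have hJ1c : Continuous J1 := by
      apply Continuous.mul
      apply Continuous.mul
      · exact Continuous.div (by continuity) (by continuity) (fun y => by positivity)
      · exact (continuous_id.mul hwd).add ((continuous_const.add hZc).mul hw.continuous)
      · exact hw.continuous
    have hJ2c : Continuous J2 := by
      apply Continuous.mul
      · exact Continuous.div (by continuity) (by continuity) (fun y => by positivity)
      · exact hw.continuous.pow 2
    have hEq1 : EqOn (fun y : ℝ => (y * deriv Zfun y / y) * Astar w y * w y * y) J1 (Ioi 0) := by
      intro y hy
      have hy0 : y ≠ 0 := ne_of_gt hy
      simp only [Astar, deriv_Zfun, hJ1]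
      field_simp
      try ring
    have hEq2 : EqOn (fun y : ℝ => (y * deriv Zfun y / y ^ 2) * (w y) ^ 2 * y) J2 (Ioi 0) := by
      intro y hy
      have hy0 : y ≠ 0 := ne_of_gt hy
      simp only [deriv_Zfun, hJ2]
      field_simp
      try ring
    rw [setIntegral_congr_fun measurableSet_Ioi hEq1,
      setIntegral_congr_fun measurableSet_Ioi hEq2]
    -- handle case of trivial support
    rcases eq_empty_or_nonempty (tsupport w) with hK | hK
    · have hw0 : ∀ y, w y = 0 := fun y =>
        image_eq_zero_of_notMem_tsupport (by simp [hK])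
      simp [hJ1, hJ2, hw0]
    · set K := tsupport w with hKdef
      have hKc : IsCompact K := hsupp
      set a : ℝ := sInf K with ha
      set b : ℝ := sSup K with hb
      have haK : a ∈ K := hKc.sInf_mem hK
      have hbK : b ∈ K := hKc.sSup_mem hK
      have ha0 : 0 < a := hsupp' haK
      have hab : a ≤ b := csInf_le_csSup hK hKc.bddBelow hKc.bddAbove
      have hwz : ∀ y : ℝ, y < a ∨ b < y → w y = 0 := by
        intro y hy
        apply image_eq_zero_of_notMem_tsupport
        intro hyK
        have h1 : a ≤ y := csInf_le hKc.bddBelow hyK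
        have h2 : y ≤ b := le_csSup hKc.bddAbove hyK
        rcases hy with hy | hy <;> linarith
      have hsub : Ioc (a / 2) (b + 1) ⊆ Ioi (0 : ℝ) := fun y hy => by
        have := hy.1; simp only [mem_Ioi]; linarith
      have hred : ∀ f : ℝ → ℝ, (∀ y, w y = 0 → f y = 0) →
          (∫ y in Ioi (0:ℝ), f y) = ∫ y in (a/2)..(b+1), f y := by
        intro f hf
        rw [intervalIntegral.integral_of_le (by linarith),
          setIntegral_eq_of_subset_of_ae_diff_eq_zero measurableSet_Ioi.nullMeasurableSet hsub]
        refine Filter.Eventually.of_forall fun y hy => hf y (hwz y ?_)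
        rcases hy with ⟨_, hy2⟩
        simp only [mem_Ioc, not_and_or, not_lt, not_le] at hy2
        rcases hy2 with h | h
        · left; linarith
        · right; linarith
      rw [hred J1 (fun y hy => by simp [hJ1, hy]), hred J2 (fun y hy => by simp [hJ2, hy])]
      -- integration by parts via an antiderivative
      set H : ℝ → ℝ := fun y => ((Zfun y) ^ 2 - 1) * (w y) ^ 2 / 2 with hH
      have hder : ∀ y : ℝ, HasDerivAt H (J1 y - J2 y) y := by
        intro y
        have hz := Zfun_hasDerivAt y
        have hwdy : HasDerivAt w (deriv w y) y :=
          ((hw.differentiable (by simp)) y).hasDerivAt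
        have h := (((hz.pow 2).sub_const 1).mul (hwdy.pow 2)).div_const 2
        refine h.congr_deriv ?_
        simp only [hJ1, hJ2, Zfun, pow_one, Pi.pow_apply, Nat.cast_ofNat, show (2:ℕ) - 1 = 1 from rfl]
        field_simp [hden y]
        ring
      have hi1 : IntervalIntegrable J1 volume (a/2) (b+1) := hJ1c.intervalIntegrable _ _
      have hi2 : IntervalIntegrable J2 volume (a/2) (b+1) := hJ2c.intervalIntegrable _ _
      have hibp : (∫ y in (a/2)..(b+1), (J1 y - J2 y)) = H (b+1) - H (a/2) :=
        intervalIntegral.integral_eq_sub_of_hasDerivAt (fun y _ => hder y) (hi1.sub hi2)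
      have hHa : H (a/2) = 0 := by
        have := hwz (a/2) (Or.inl (by linarith))
        simp [hH, this]
      have hHb : H (b+1) = 0 := by
        have := hwz (b+1) (Or.inr (by linarith))
        simp [hH, this]
      have := hibp
      rw [hHa, hHb, sub_zero, intervalIntegral.integral_sub hi1 hi2, sub_eq_zero] at this
      exact this
  · apply setIntegral_nonpos measurableSet_Ioi
    intro y hy
    have hy0 : (0:ℝ) < y := hy
    have h1 : y * deriv Zfun y / y ^ 2 ≤ 0 := by
      rw [deriv_Zfun]
      have h : y * (-4 * y / (1 + y ^ 2) ^ 2) / y ^ 2 =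
          -(4 * y ^ 2) / ((1 + y ^ 2) ^ 2 * y ^ 2) := by
        field_simp
      rw [h]
      apply div_nonpos_of_nonpos_of_nonneg
      · nlinarith [sq_nonneg y]
      · positivity
    have h2 : (0:ℝ) ≤ (w y) ^ 2 := sq_nonneg _
    have := mul_nonpos_of_nonpos_of_nonneg (mul_nonpos_of_nonpos_of_nonneg h1 h2) (le_of_lt hy0)
    exact this
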